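/- Let $X$ be a sequentially complete separated uniform space with graph $G$ satisfying property $(\ast)$, and $T : X \to X$ a Banach $G$-contraction. Then there is a bijection between the fixed point set $\mathrm{Fix}(T)$ and the set of components $\{[x]_{\widetilde{G}} : x \in X_T\}$, given by $x \mapsto [x]_{\widetilde{G}}$; in particular $\mathrm{card}(\mathrm{Fix}(T)) = \mathrm{card}\{[x]_{\widetilde{G}} : x \in X_T\}$. -/

import Mathlib

open Filter Topology Set

/-- A pseudometric on `X`. -/
def IsPseudoMetric {X : Type*} (d : X → X → ℝ) : Prop :=
  (∀ x, d x x = 0) ∧ (∀ x y, d x y = d y x) ∧ (∀ x y z, d x z ≤ d x y + d y z)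

/-- The set `V(ρ, r) = {(x,y) : ρ(x,y) < r}`. -/
def VEnt {X : Type*} (d : X → X → ℝ) (r : ℝ) : Set (X × X) := {p | d p.1 p.2 < r}

/-- The scaled basic entourage `α V = ⋂ i, V(ρ i, α * r i)`. -/
def scaledEnt {X : Type*} {m : ℕ} (ρ : Fin m → X → X → ℝ) (r : Fin m → ℝ) (α : ℝ) :
    Set (X × X) := ⋂ i, VEnt (ρ i) (α * r i)

/-- The uniformity of `X` is generated by the family `F` of pseudometrics:
each `V(F i, r)` is an entourage, and the basic entourages form a base. -/
def GeneratesUniformity {X ι : Type*} [UniformSpace X] (F : ι → X → X → ℝ) : Prop :=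
  (∀ i, IsPseudoMetric (F i)) ∧
  (∀ i (r : ℝ), 0 < r → VEnt (F i) r ∈ uniformity X) ∧
  (∀ U ∈ uniformity X, ∃ (m : ℕ) (f : Fin m → ι) (r : Fin m → ℝ),
    (∀ i, 0 < r i) ∧ scaledEnt (fun i => F (f i)) r 1 ⊆ U)

/-- `T` is a Banach `G`-contraction (with edge set `E`) with contractive constant `α`,
with respect to the family `F` of pseudometrics. -/
def BanachGContraction {X ι : Type*} (F : ι → X → X → ℝ) (E : Set (X × X))
    (T : X → X) (α : ℝ) : Prop :=
  (∀ x y : X, (x, y) ∈ E → (T x, T y) ∈ E) ∧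
  (∀ (m : ℕ) (f : Fin m → ι) (r : Fin m → ℝ), (∀ i, 0 < r i) →
    ∀ x y : X, (x, y) ∈ scaledEnt (fun i => F (f i)) r 1 ∩ E →
      (T x, T y) ∈ scaledEnt (fun i => F (f i)) r α)

/-- The relation of the symmetrized graph `G̃`. -/
def symRel {X : Type*} (E : Set (X × X)) (a b : X) : Prop := (a, b) ∈ E ∨ (b, a) ∈ E

/-- The edge set of the symmetrized graph `G̃`. -/
def symEdges {X : Type*} (E : Set (X × X)) : Set (X × X) :=
  E ∪ {p | (p.2, p.1) ∈ E}

/-- The component `[x]_{G̃}` of `x`: all points joined to `x` by a path in `G̃`. -/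
def component {X : Type*} (E : Set (X × X)) (x : X) : Set X :=
  {y | Relation.ReflTransGen (symRel E) x y}

set_option maxHeartbeats 1000000 in
theorem stmt14 {X ι : Type*} [UniformSpace X] (F : ι → X → X → ℝ)
    (hgen : GeneratesUniformity F)
    (hsep : ∀ x y : X, (∀ U ∈ uniformity X, (x, y) ∈ U) → x = y)
    (hcomp : ∀ u : ℕ → X, CauchySeq u → ∃ z : X, Tendsto u atTop (nhds z))
    (E : Set (X × X)) (hloop : ∀ x : X, (x, x) ∈ E)
    (hstar : ∀ (u : ℕ → X) (z : X), Tendsto u atTop (nhds z) →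
      (∀ n : ℕ, (u n, u (n + 1)) ∈ E) →
      ∃ φ : ℕ → ℕ, StrictMono φ ∧ ∀ k : ℕ, (u (φ k), z) ∈ E)
    (T : X → X) (α : ℝ) (hα0 : 0 < α) (hα1 : α < 1)
    (hT : BanachGContraction F E T α) :
    Set.BijOn (fun x => component E x) {x : X | T x = x}
      ((fun x => component E x) '' {x : X | (x, T x) ∈ E}) := by
  obtain ⟨hpm, hVmem, hbase⟩ := hgen
  have hF0 : ∀ i x, F i x x = 0 := fun i x => (hpm i).1 x
  have hFsymm : ∀ i x y, F i x y = F i y x := fun i => (hpm i).2.1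
  have hFtri : ∀ i x y z, F i x z ≤ F i x y + F i y z := fun i => (hpm i).2.2
  have hFnn : ∀ i x y, 0 ≤ F i x y := by
    intro i x y
    have h := hFtri i x y x
    rw [hF0, hFsymm i y x] at h
    linarith
  have h1α : (0:ℝ) < 1 - α := by linarith
  have hedge : ∀ a b : X, (a, b) ∈ E → (T a, T b) ∈ E := hT.1
  -- separation from the pseudometrics
  have hsep' : ∀ a b : X, (∀ i, F i a b ≤ 0) → a = b := by
    intro a b hab
    apply hsep a b
    intro U hU
    obtain ⟨m, f, r, hr, hsub⟩ := hbase U hU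
    apply hsub
    simp only [scaledEnt, Set.mem_iInter]
    intro j
    show F (f j) a b < 1 * r j
    rw [one_mul]
    exact lt_of_le_of_lt (hab _) (hr j)
  -- contraction in pseudometric form
  have hcontr : ∀ a b : X, (a, b) ∈ E → ∀ i, F i (T a) (T b) ≤ α * F i a b := by
    intro a b hab i
    have key : ∀ ε > (0:ℝ), F i (T a) (T b) < α * (F i a b + ε) := by
      intro ε hε
      have hr : ∀ j : Fin 1, 0 < (fun _ : Fin 1 => F i a b + ε) j := by
        intro j
        have := hFnn i a b
        simp only
        linarith
      have hmem : (a, b) ∈ scaledEnt (fun _ : Fin 1 => F (i)) (fun _ => F i a b + ε) 1 ∩ E := by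
        constructor
        · simp only [scaledEnt, Set.mem_iInter]
          intro j
          show F i a b < 1 * (F i a b + ε)
          rw [one_mul]; linarith
        · exact hab
      have h2 := hT.2 1 (fun _ => i) (fun _ => F i a b + ε) hr a b hmem
      simp only [scaledEnt, Set.mem_iInter] at h2
      exact h2 0
    apply le_of_forall_pos_lt_add
    intro ε hε
    have h := key (ε / α) (div_pos hε hα0)
    have heq : α * (F i a b + ε / α) = α * F i a b + ε := by
      field_simp
    linarith
  -- iterates preserve edges and contract
  have hIter : ∀ n (a b : X), (a, b) ∈ E →
      (T^[n] a, T^[n] b) ∈ E ∧ ∀ i, F i (T^[n] a) (T^[n] b) ≤ α ^ n * F i a b := by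
    intro n
    induction n with
    | zero =>
      intro a b hab
      exact ⟨hab, fun i => by simp⟩
    | succ n ih =>
      intro a b hab
      obtain ⟨h1, h2⟩ := ih a b hab
      constructor
      · rw [Function.iterate_succ_apply', Function.iterate_succ_apply']
        exact hedge _ _ h1
      · intro i
        rw [Function.iterate_succ_apply', Function.iterate_succ_apply']
        calc F i (T (T^[n] a)) (T (T^[n] b)) ≤ α * F i (T^[n] a) (T^[n] b) := hcontr _ _ h1 i
          _ ≤ α * (α ^ n * F i a b) := by nlinarith [h2 i]
          _ = α ^ (n + 1) * F i a b := by ring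
  -- the main Picard iteration argument
  have main : ∀ x : X, (x, T x) ∈ E →
      ∃ z : X, T z = z ∧ Relation.ReflTransGen (symRel E) x z := by
    intro x hx
    have hchain : ∀ n, (T^[n] x, T^[n + 1] x) ∈ E := by
      intro n
      rw [Function.iterate_succ_apply]
      exact (hIter n x (T x) hx).1
    have hbd : ∀ i p n, F i (T^[n] x) (T^[n + p] x) ≤ α ^ n * F i x (T x) / (1 - α) := by
      intro i p
      induction p with
      | zero =>
        intro n
        rw [Nat.add_zero, hF0]
        exact div_nonneg (mul_nonneg (pow_nonneg hα0.le n) (hFnn i x (T x))) h1α.le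
      | succ p ih =>
        intro n
        rw [show n + (p + 1) = (n + 1) + p by omega]
        have t1 : F i (T^[n] x) (T^[n + 1] x) ≤ α ^ n * F i x (T x) := by
          rw [Function.iterate_succ_apply]
          exact (hIter n x (T x) hx).2 i
        have t2 := ih (n + 1)
        have t3 := hFtri i (T^[n] x) (T^[n + 1] x) (T^[(n + 1) + p] x)
        have heq : α ^ n * F i x (T x) + α ^ (n + 1) * F i x (T x) / (1 - α)
            = α ^ n * F i x (T x) / (1 - α) := by
          rw [pow_succ]
          field_simp
          ring
        linarith
    have hcauchy : CauchySeq (fun n => T^[n] x) := by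
      rw [cauchySeq_iff]
      intro U hU
      obtain ⟨m, f, r, hr, hsub⟩ := hbase U hU
      have hev : ∀ᶠ n in atTop, ∀ j : Fin m, α ^ n * F (f j) x (T x) / (1 - α) < r j := by
        rw [eventually_all]
        intro j
        have h1 : Tendsto (fun n => α ^ n * F (f j) x (T x) / (1 - α)) atTop (nhds 0) := by
          simpa using ((tendsto_pow_atTop_nhds_zero_of_lt_one hα0.le hα1).mul_const
            (F (f j) x (T x))).div_const (1 - α)
        exact h1.eventually_lt_const (hr j)
      obtain ⟨N, hN⟩ := eventually_atTop.1 hev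
      refine ⟨N, fun k hk l hl => ?_⟩
      apply hsub
      simp only [scaledEnt, Set.mem_iInter]
      intro j
      show F (f j) (T^[k] x) (T^[l] x) < 1 * r j
      rw [one_mul]
      rcases le_total k l with h | h
      · obtain ⟨p, rfl⟩ : ∃ p, l = k + p := ⟨l - k, by omega⟩
        exact lt_of_le_of_lt (hbd (f j) p k) (hN k hk j)
      · obtain ⟨p, rfl⟩ : ∃ p, k = l + p := ⟨k - l, by omega⟩
        rw [hFsymm]
        exact lt_of_le_of_lt (hbd (f j) p l) (hN l hl j)
    obtain ⟨z, hz⟩ := hcomp _ hcauchy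
    have hz' := Uniform.tendsto_nhds_right.1 hz
    have hFconv : ∀ i, Tendsto (fun n => F i (T^[n] x) z) atTop (nhds 0) := by
      intro i
      rw [Metric.tendsto_atTop]
      intro ε hε
      have hev : ∀ᶠ n in atTop, (z, T^[n] x) ∈ VEnt (F i) ε :=
        hz'.eventually (eventually_mem_set.2 (hVmem i ε hε))
      obtain ⟨N, hN⟩ := eventually_atTop.1 hev
      refine ⟨N, fun n hn => ?_⟩
      have h := hN n hn
      rw [Real.dist_eq, sub_zero, abs_of_nonneg (hFnn i _ _), hFsymm]
      exact h
    obtain ⟨φ, hφ, hφE⟩ := hstar _ z hz hchain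
    have hφt : Tendsto φ atTop atTop := hφ.tendsto_atTop
    have key : ∀ i, F i z (T z) ≤ 0 := by
      intro i
      have a1 : Tendsto (fun k => F i (T^[φ k + 1] x) z) atTop (nhds 0) :=
        (hFconv i).comp (tendsto_atTop_mono (fun k => Nat.le_succ (φ k)) hφt)
      have a2 : Tendsto (fun k => α * F i (T^[φ k] x) z) atTop (nhds 0) := by
        simpa using ((hFconv i).comp hφt).const_mul α
      have htend : Tendsto (fun k => F i (T^[φ k + 1] x) z + α * F i (T^[φ k] x) z)
          atTop (nhds 0) := by
        simpa using a1.add a2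
      have bound : ∀ k, F i z (T z) ≤ F i (T^[φ k + 1] x) z + α * F i (T^[φ k] x) z := by
        intro k
        have t1 := hFtri i z (T^[φ k + 1] x) (T z)
        have t2 : F i (T^[φ k + 1] x) (T z) ≤ α * F i (T^[φ k] x) z := by
          rw [Function.iterate_succ_apply']
          exact hcontr _ _ (hφE k) i
        have t3 : F i z (T^[φ k + 1] x) = F i (T^[φ k + 1] x) z := hFsymm i _ _
        linarith
      exact ge_of_tendsto' htend bound
    have hzfix : T z = z := (hsep' z (T z) key).symm
    have hpath0 : ∀ n, Relation.ReflTransGen (symRel E) x (T^[n] x) := by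
      intro n
      induction n with
      | zero => exact Relation.ReflTransGen.refl
      | succ n ih => exact ih.tail (Or.inl (hchain n))
    exact ⟨z, hzfix, (hpath0 (φ 0)).tail (Or.inl (hφE 0))⟩
  -- symmetry of the component relation
  have hsym : Symmetric (symRel E) := fun a b h => h.elim Or.inr Or.inl
  have hRTsym : Symmetric (Relation.ReflTransGen (symRel E)) :=
    (@Relation.ReflTransGen.stdSymm _ _ ⟨hsym⟩).symm
  have hcompeq : ∀ a b : X, Relation.ReflTransGen (symRel E) a b →
      component E a = component E b := by
    intro a b hab
    ext y
    constructor
    · intro h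
      exact (hRTsym hab).trans h
    · intro h
      exact hab.trans h
  refine ⟨?_, ?_, ?_⟩
  · -- MapsTo
    intro x hx
    refine ⟨x, ?_, rfl⟩
    simp only [Set.mem_setOf_eq] at hx ⊢
    rw [hx]
    exact hloop x
  · -- InjOn
    intro x hx y hy hxy
    simp only [Set.mem_setOf_eq] at hx hy
    have hxy' : component E x = component E y := hxy
    have hmem : y ∈ component E x := by
      rw [hxy']
      exact Relation.ReflTransGen.refl
    have hxyR : Relation.ReflTransGen (symRel E) x y := hmem
    have hT0 : ∀ i, Tendsto (fun n => F i (T^[n] x) (T^[n] y)) atTop (nhds 0) := by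
      have : ∀ c : X, Relation.ReflTransGen (symRel E) x c →
          ∀ i, Tendsto (fun n => F i (T^[n] x) (T^[n] c)) atTop (nhds 0) := by
        intro c hc
        induction hc with
        | refl =>
          intro i
          simp only [hF0]
          exact (tendsto_const_nhds : Tendsto (fun _ : ℕ => (0:ℝ)) atTop (nhds 0))
        | @tail b c hab hbc ih =>
          intro i
          have hedge0 : Tendsto (fun n => F i (T^[n] b) (T^[n] c)) atTop (nhds 0) := by
            rcases hbc with h | h
            · apply squeeze_zero (fun n => hFnn i _ _) (fun n => (hIter n b c h).2 i)
              simpa using (tendsto_pow_atTop_nhds_zero_of_lt_one hα0.le hα1).mul_const (F i b c)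
            · have hb : ∀ n, F i (T^[n] b) (T^[n] c) ≤ α ^ n * F i c b := by
                intro n
                rw [hFsymm]
                exact (hIter n c b h).2 i
              apply squeeze_zero (fun n => hFnn i _ _) hb
              simpa using (tendsto_pow_atTop_nhds_zero_of_lt_one hα0.le hα1).mul_const (F i c b)
          have hsum : Tendsto (fun n => F i (T^[n] x) (T^[n] b) + F i (T^[n] b) (T^[n] c))
              atTop (nhds 0) := by
            simpa using (ih i).add hedge0
          exact squeeze_zero (fun n => hFnn i _ _) (fun n => hFtri i _ (T^[n] b) _) hsum
      exact this y hxyR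
    apply hsep' x y
    intro i
    have h := hT0 i
    simp only [Function.iterate_fixed hx, Function.iterate_fixed hy] at h
    have := tendsto_nhds_unique h (tendsto_const_nhds : Tendsto (fun _ : ℕ => F i x y) atTop _)
    linarith [this]
  · -- SurjOn
    rintro _ ⟨x, hx, rfl⟩
    simp only [Set.mem_setOf_eq] at hx
    obtain ⟨z, hzfix, hpath⟩ := main x hx
    exact ⟨z, hzfix, (hcompeq x z hpath).symm⟩
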